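/- arXiv:0811.2126 — 3 statements merged into one kernel-verified Lean document; each statement's English description precedes it below -/
import Mathlib

section
/- Let n ≥ 3, p = 1, γ = n and α = n. If f is a Lebesgue measurable function on R^{n−1} satisfying ∫_{R^{n−1}} |f(y')|/(1+|y'|)^n dy' < ∞, and v is the Poisson integral of f on the upper half-space H, then v(x) = o( x_n^{1−n} |x|^n ) as |x| → ∞, uniformly for x ∈ H (no exceptional set is needed). -/
open MeasureTheory Filter Metric Asymptotics ENNReal
open Topology

/-- The last coordinate `x_n` of a point `x ∈ ℝⁿ`. -/
noncomputable def lastCoord {n : ℕ} (x : EuclideanSpace ℝ (Fin n)) : ℝ :=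
  if h : 0 < n then x ⟨n - 1, Nat.sub_lt h one_pos⟩ else 0

/-- The upper half-space `H = {x ∈ ℝⁿ : x_n > 0}`. -/
def upperHalfSpace (n : ℕ) : Set (EuclideanSpace ℝ (Fin n)) :=
  {x | 0 < lastCoord x}

/-- `ω_n = 2 π^{n/2} / Γ(n/2)`, the surface area of the unit sphere in ℝⁿ. -/
noncomputable def surfaceArea (n : ℕ) : ℝ :=
  2 * Real.pi ^ ((n : ℝ) / 2) / Real.Gamma ((n : ℝ) / 2)

/-- The embedding `y' ↦ (y', 0)` of `ℝ^{n-1}` into `ℝⁿ`. -/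
noncomputable def extendBdry {n : ℕ} (y' : EuclideanSpace ℝ (Fin (n - 1))) :
    EuclideanSpace ℝ (Fin n) :=
  (EuclideanSpace.equiv (Fin n) ℝ).symm
    (fun i => if h : (i : ℕ) < n - 1 then y' ⟨(i : ℕ), h⟩ else 0)

/-- The Poisson kernel `P(x, y') = 2 x_n / (ω_n |x - (y',0)|^n)` of the half-space. -/
noncomputable def halfSpacePoissonKernel (n : ℕ) (x : EuclideanSpace ℝ (Fin n))
    (y' : EuclideanSpace ℝ (Fin (n - 1))) : ℝ :=
  2 * lastCoord x / (surfaceArea n * ‖x - extendBdry y'‖ ^ n)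

/-- The Poisson integral `v(x) = ∫_{ℝ^{n-1}} P(x,y') f(y') dy'`. -/
noncomputable def poissonIntegral (n : ℕ) (f : EuclideanSpace ℝ (Fin (n - 1)) → ℝ)
    (x : EuclideanSpace ℝ (Fin n)) : ℝ :=
  ∫ y', halfSpacePoissonKernel n x y' * f y'

/-- The reflection `y* = (y', -y_n)` of `y` in the boundary hyperplane. -/
noncomputable def reflectPt {n : ℕ} (y : EuclideanSpace ℝ (Fin n)) :
    EuclideanSpace ℝ (Fin n) :=
  (EuclideanSpace.equiv (Fin n) ℝ).symm
    (fun i => if (i : ℕ) = n - 1 then -(y i) else y i)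

/-- The Green function `G(x,y) = r_n (|x - y*|^{2-n} - |x - y|^{2-n})` of the
half-space, where `r_n = 1/((n-2) ω_n)`. -/
noncomputable def greenFn (n : ℕ) (x y : EuclideanSpace ℝ (Fin n)) : ℝ :=
  (1 / (((n : ℝ) - 2) * surfaceArea n)) *
    (‖x - reflectPt y‖ ^ ((2 : ℝ) - n) - ‖x - y‖ ^ ((2 : ℝ) - n))

/-- The Green potential `h(x) = ∫_H G(x,y) dμ(y)`. -/
noncomputable def greenPotential (n : ℕ) (μ : Measure (EuclideanSpace ℝ (Fin n)))
    (x : EuclideanSpace ℝ (Fin n)) : ℝ :=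
  ∫ y in upperHalfSpace n, greenFn n x y ∂μ

/-- The maximal function of order `β` of a Borel measure `μ`:
`M(dμ)(x) = sup_{0<r<∞} μ(B(x,r))/r^β`. -/
noncomputable def maxFn {n : ℕ} (μ : Measure (EuclideanSpace ℝ (Fin n))) (β : ℝ)
    (x : EuclideanSpace ℝ (Fin n)) : ℝ≥0∞ :=
  ⨆ (r : ℝ) (_ : 0 < r), μ (Metric.ball x r) / ENNReal.ofReal (r ^ β)

lemma surfaceArea_pos {n : ℕ} (hn : 0 < n) : 0 < surfaceArea n := by
  have h1 : (0:ℝ) < (n:ℝ)/2 := by positivity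
  have := Real.Gamma_pos_of_pos h1
  have h2 : (0:ℝ) < Real.pi ^ ((n : ℝ) / 2) := Real.rpow_pos_of_pos Real.pi_pos _
  unfold surfaceArea
  positivity

lemma abs_coord_le_norm {n : ℕ} (x : EuclideanSpace ℝ (Fin n)) (i : Fin n) :
    |x i| ≤ ‖x‖ := by
  rw [EuclideanSpace.norm_eq]
  have : |x i| = Real.sqrt (‖x i‖ ^ 2) := by
    rw [Real.sqrt_sq_eq_abs]; simp [abs_abs]
  rw [this]
  apply Real.sqrt_le_sqrt
  exact Finset.single_le_sum (f := fun j => ‖x j‖ ^ 2) (fun j _ => by positivity)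
    (Finset.mem_univ i)

lemma lastCoord_eq {n : ℕ} (hn : 0 < n) (x : EuclideanSpace ℝ (Fin n)) :
    lastCoord x = x ⟨n - 1, Nat.sub_lt hn one_pos⟩ := by
  simp [lastCoord, hn]

lemma extendBdry_last {n : ℕ} (hn : 0 < n) (y' : EuclideanSpace ℝ (Fin (n - 1))) :
    lastCoord (extendBdry y') = 0 := by
  rw [lastCoord_eq hn]
  show (if h : n - 1 < n - 1 then _ else (0:ℝ)) = 0
  simp

lemma lastCoord_sub {n : ℕ} (x y : EuclideanSpace ℝ (Fin n)) :
    lastCoord (x - y) = lastCoord x - lastCoord y := by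
  unfold lastCoord
  split_ifs with h
  · rfl
  · ring

lemma lastCoord_le_dist {n : ℕ} (hn : 0 < n) (x : EuclideanSpace ℝ (Fin n))
    (y' : EuclideanSpace ℝ (Fin (n - 1))) : lastCoord x ≤ ‖x - extendBdry y'‖ := by
  have h1 : lastCoord (x - extendBdry y') = lastCoord x := by
    rw [lastCoord_sub, extendBdry_last hn, sub_zero]
  calc lastCoord x ≤ |lastCoord (x - extendBdry y')| := by rw [h1]; exact le_abs_self _
    _ ≤ ‖x - extendBdry y'‖ := by
        rw [lastCoord_eq hn]; exact abs_coord_le_norm _ _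

lemma norm_le_extendBdry {n : ℕ} (y' : EuclideanSpace ℝ (Fin (n - 1))) :
    ‖y'‖ ≤ ‖extendBdry y'‖ := by
  rw [EuclideanSpace.norm_eq, EuclideanSpace.norm_eq]
  apply Real.sqrt_le_sqrt
  have : ∑ j : Fin (n-1), ‖y' j‖ ^ 2
      = ∑ i ∈ Finset.univ.map (Fin.castLEEmb (Nat.sub_le n 1)), ‖extendBdry y' i‖ ^ 2 := by
    rw [Finset.sum_map]
    apply Finset.sum_congr rfl
    intro j _
    congr 1
    show ‖y' j‖ = ‖extendBdry y' (Fin.castLE (Nat.sub_le n 1) j)‖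
    have hj : ((Fin.castLE (Nat.sub_le n 1) j : Fin n) : ℕ) < n - 1 := j.2
    show ‖y' j‖ = ‖(if h : ((Fin.castLE (Nat.sub_le n 1) j : Fin n) : ℕ) < n - 1
      then y' ⟨_, h⟩ else 0)‖
    rw [dif_pos hj]
    congr 1
  rw [this]
  exact Finset.sum_le_sum_of_subset_of_nonneg (Finset.subset_univ _)
    (fun i _ _ => by positivity)

lemma continuous_extendBdry {n : ℕ} : Continuous (extendBdry (n := n)) := by
  apply ((EuclideanSpace.equiv (Fin n) ℝ).symm : _ ≃L[ℝ] _).continuous.comp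
  apply continuous_pi
  intro i
  by_cases h : (i : ℕ) < n - 1
  · simpa [h] using (EuclideanSpace.proj (𝕜 := ℝ) (⟨(i:ℕ), h⟩ : Fin (n-1))).continuous
  · simpa [h] using continuous_const (y := (0:ℝ))

lemma kernel_nonneg {n : ℕ} (hn : 0 < n) {x : EuclideanSpace ℝ (Fin n)}
    (hx : x ∈ upperHalfSpace n) (y' : EuclideanSpace ℝ (Fin (n - 1))) :
    0 ≤ halfSpacePoissonKernel n x y' := by
  have ht : 0 < lastCoord x := hx
  have hω := surfaceArea_pos hn
  unfold halfSpacePoissonKernel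
  positivity

lemma rpow_one_sub {t : ℝ} (ht : 0 < t) (n : ℕ) : t ^ (1 - (n:ℝ)) = t / t ^ n := by
  rw [Real.rpow_sub ht, Real.rpow_one, Real.rpow_natCast]

lemma kernel_near {n : ℕ} (hn : 0 < n) {x : EuclideanSpace ℝ (Fin n)}
    (hx : x ∈ upperHalfSpace n) (y' : EuclideanSpace ℝ (Fin (n - 1))) :
    halfSpacePoissonKernel n x y' ≤ (2 / surfaceArea n) * lastCoord x ^ (1 - (n:ℝ)) := by
  have ht : 0 < lastCoord x := hx
  have hω := surfaceArea_pos hn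
  have hρ : lastCoord x ≤ ‖x - extendBdry y'‖ := lastCoord_le_dist hn x y'
  have h1 : halfSpacePoissonKernel n x y' ≤ 2 * lastCoord x / (surfaceArea n * lastCoord x ^ n) := by
    apply div_le_div_of_nonneg_left (by linarith) (by positivity)
    exact mul_le_mul_of_nonneg_left (pow_le_pow_left₀ ht.le hρ n) hω.le
  refine h1.trans_eq ?_
  rw [rpow_one_sub ht]
  field_simp

lemma kernel_tail {n : ℕ} (hn : 0 < n) {x : EuclideanSpace ℝ (Fin n)}
    (hx : x ∈ upperHalfSpace n) (hx1 : 1 ≤ ‖x‖) (y' : EuclideanSpace ℝ (Fin (n - 1))) :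
    halfSpacePoissonKernel n x y' ≤
      (2 * 3 ^ n / surfaceArea n) * (lastCoord x ^ (1 - (n:ℝ)) * ‖x‖ ^ n)
        / (1 + ‖y'‖) ^ n := by
  set t := lastCoord x with htdef
  have ht : 0 < t := hx
  have hω := surfaceArea_pos hn
  have hρ : t ≤ ‖x - extendBdry y'‖ := lastCoord_le_dist hn x y'
  set ρ := ‖x - extendBdry y'‖ with hρdef
  have hρ0 : 0 < ρ := lt_of_lt_of_le ht hρ
  have htx : t ≤ ‖x‖ := by
    rw [htdef, lastCoord_eq hn]
    exact (le_abs_self _).trans (abs_coord_le_norm x _)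
  have hy : ‖y'‖ ≤ ‖x‖ + ρ := by
    calc ‖y'‖ ≤ ‖extendBdry y'‖ := norm_le_extendBdry y'
      _ = ‖x - (x - extendBdry y')‖ := by congr 1; exact (sub_sub_cancel x (extendBdry y')).symm
      _ ≤ ‖x‖ + ρ := norm_sub_le _ _
  have hcore : t * (1 + ‖y'‖) ≤ 3 * (‖x‖ * ρ) := by nlinarith
  have hq0 : (0:ℝ) < (1 + ‖y'‖) ^ n := by positivity
  have key : 2 * t * (1 + ‖y'‖) ^ n ≤ 2 * 3 ^ n * (t ^ (1 - (n:ℝ)) * ‖x‖ ^ n) * ρ ^ n := by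
    have h2 : (t * (1 + ‖y'‖)) ^ n ≤ (3 * (‖x‖ * ρ)) ^ n :=
      pow_le_pow_left₀ (by positivity) hcore n
    have h3 : t ^ (1 - (n:ℝ)) = t / t ^ n := rpow_one_sub ht n
    rw [h3]
    rw [mul_pow, mul_pow, mul_pow] at h2
    have htn : (0:ℝ) < t ^ n := by positivity
    rw [show 2 * 3 ^ n * (t / t ^ n * ‖x‖ ^ n) * ρ ^ n
        = 2 * 3 ^ n * t * ‖x‖ ^ n * ρ ^ n / t ^ n from by ring, le_div_iff₀ htn]
    calc 2 * t * (1 + ‖y'‖) ^ n * t ^ n = 2 * t * (t ^ n * (1 + ‖y'‖) ^ n) := by ring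
      _ ≤ 2 * t * (3 ^ n * (‖x‖ ^ n * ρ ^ n)) := by
          apply mul_le_mul_of_nonneg_left h2 (by positivity)
      _ = 2 * 3 ^ n * t * ‖x‖ ^ n * ρ ^ n := by ring
  show 2 * t / (surfaceArea n * ρ ^ n) ≤ _
  rw [show 2 * 3 ^ n / surfaceArea n * (t ^ (1 - (n:ℝ)) * ‖x‖ ^ n) / (1 + ‖y'‖) ^ n
      = (2 * 3 ^ n * (t ^ (1 - (n:ℝ)) * ‖x‖ ^ n)) / (surfaceArea n * (1 + ‖y'‖) ^ n)
      from by ring, div_le_div_iff₀ (by positivity) (by positivity)]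
  calc 2 * t * (surfaceArea n * (1 + ‖y'‖) ^ n)
      = surfaceArea n * (2 * t * (1 + ‖y'‖) ^ n) := by ring
    _ ≤ surfaceArea n * (2 * 3 ^ n * (t ^ (1 - (n:ℝ)) * ‖x‖ ^ n) * ρ ^ n) :=
        mul_le_mul_of_nonneg_left key hω.le
    _ = 2 * 3 ^ n * (t ^ (1 - (n:ℝ)) * ‖x‖ ^ n) * (surfaceArea n * ρ ^ n) := by ring

variable {n : ℕ}

lemma measurable_kernel (hn : 0 < n) (x : EuclideanSpace ℝ (Fin n)) :
    Measurable (fun y' => halfSpacePoissonKernel n x y') := by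
  unfold halfSpacePoissonKernel
  exact measurable_const.div
    ((measurable_const.mul (((continuous_const.sub continuous_extendBdry).norm.pow n).measurable)))

lemma g0_integrable (f : EuclideanSpace ℝ (Fin (n - 1)) → ℝ) (hf : Measurable f)
    (hfint : ∫⁻ y', ENNReal.ofReal (|f y'| / (1 + ‖y'‖) ^ (n : ℝ)) < ⊤) :
    Integrable (fun y' => |f y'| / (1 + ‖y'‖) ^ n) := by
  have hmeas : Measurable (fun y' : EuclideanSpace ℝ (Fin (n-1)) => |f y'| / (1 + ‖y'‖) ^ n) :=
    hf.abs.div ((continuous_const.add continuous_norm).pow n).measurable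
  refine ⟨hmeas.aestronglyMeasurable, ?_⟩
  rw [hasFiniteIntegral_iff_norm]
  refine lt_of_le_of_lt (le_of_eq (lintegral_congr fun y' => ?_)) hfint
  rw [Real.rpow_natCast, Real.norm_eq_abs, abs_of_nonneg (by positivity)]

lemma tail_tendsto (g0 : EuclideanSpace ℝ (Fin (n - 1)) → ℝ) (hg0 : Integrable g0) :
    Tendsto (fun k : ℕ => ∫ y' in (closedBall (0 : EuclideanSpace ℝ (Fin (n-1))) (k:ℝ))ᶜ, g0 y')
      atTop (𝓝 0) := by
  have hmono : Monotone (fun k : ℕ => closedBall (0 : EuclideanSpace ℝ (Fin (n-1))) (k:ℝ)) :=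
    fun a b hab => closedBall_subset_closedBall (Nat.cast_le.mpr hab)
  have hunion : (⋃ k : ℕ, closedBall (0 : EuclideanSpace ℝ (Fin (n-1))) (k:ℝ)) = Set.univ := by
    ext y
    simp only [Set.mem_iUnion, mem_closedBall, dist_zero_right, Set.mem_univ, iff_true]
    exact exists_nat_ge ‖y‖
  have h1 : Tendsto (fun k : ℕ => ∫ y' in closedBall (0 : EuclideanSpace ℝ (Fin (n-1))) (k:ℝ), g0 y')
      atTop (𝓝 (∫ y', g0 y')) := by
    have := tendsto_setIntegral_of_monotone (fun k : ℕ => measurableSet_closedBall)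
      hmono (by rw [hunion]; exact hg0.integrableOn)
    rwa [hunion, setIntegral_univ] at this
  have h2 : ∀ k : ℕ, ∫ y' in (closedBall (0 : EuclideanSpace ℝ (Fin (n-1))) (k:ℝ))ᶜ, g0 y'
      = (∫ y', g0 y') - ∫ y' in closedBall (0 : EuclideanSpace ℝ (Fin (n-1))) (k:ℝ), g0 y' := by
    intro k
    rw [← integral_add_compl (measurableSet_closedBall :
      MeasurableSet (closedBall (0 : EuclideanSpace ℝ (Fin (n-1))) (k:ℝ))) hg0]
    ring
  simp only [h2]
  simpa using (tendsto_const_nhds (x := ∫ y', g0 y')).sub h1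


/-- The case `p = 1`, `γ = n`, `α = n` (Siegel–Talvila, `m = 0`): the growth
estimate `v(x) = o(x_n^{1-n} |x|^n)` holds on all of `H`, with no exceptional set. -/
theorem stmt2 (n : ℕ) (hn : 3 ≤ n)
    (f : EuclideanSpace ℝ (Fin (n - 1)) → ℝ) (hf : Measurable f)
    (hfint : ∫⁻ y', ENNReal.ofReal (|f y'| / (1 + ‖y'‖) ^ (n : ℝ)) < ⊤) :
    poissonIntegral n f =o[comap (fun x => ‖x‖) atTop ⊓ 𝓟 (upperHalfSpace n)]
      fun x => lastCoord x ^ (1 - (n : ℝ)) * ‖x‖ ^ (n : ℝ) := by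
  have hn0 : 0 < n := by omega
  have hω := surfaceArea_pos hn0
  set g0 : EuclideanSpace ℝ (Fin (n-1)) → ℝ := fun y' => |f y'| / (1 + ‖y'‖) ^ n with hg0def
  have hg0int : Integrable g0 := g0_integrable f hf hfint
  have hg0nonneg : ∀ y', 0 ≤ g0 y' := fun y' => by positivity
  rw [isLittleO_iff]
  intro c hc
  have hC : (0:ℝ) < 2 * 3 ^ n / surfaceArea n := by positivity
  -- choose the cutoff radius k
  obtain ⟨k, hk⟩ : ∃ k : ℕ, ∫ y' in (closedBall (0 : EuclideanSpace ℝ (Fin (n-1))) (k:ℝ))ᶜ, g0 y'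
      < c / (2 * (2 * 3 ^ n / surfaceArea n)) :=
    ((tail_tendsto g0 hg0int).eventually (gt_mem_nhds (by positivity))).exists
  set s : Set (EuclideanSpace ℝ (Fin (n-1))) := closedBall 0 (k:ℝ) with hsdef
  have hs : MeasurableSet s := measurableSet_closedBall
  -- f is integrable on s
  have hfk_int : IntegrableOn (fun y' => |f y'|) s := by
    refine Integrable.mono' ((hg0int.const_mul ((1+(k:ℝ))^n)).integrableOn)
      hf.abs.aestronglyMeasurable.restrict ?_
    refine (ae_restrict_iff' hs).mpr (ae_of_all _ fun y' hy' => ?_)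
    have hyk : ‖y'‖ ≤ (k:ℝ) := by simpa [hsdef, dist_zero_right] using hy'
    have hq : (0:ℝ) < (1 + ‖y'‖) ^ n := by positivity
    rw [Real.norm_eq_abs, abs_abs]
    have h1 : |f y'| = g0 y' * (1 + ‖y'‖) ^ n := by
      rw [hg0def]; field_simp
    rw [h1]
    calc g0 y' * (1 + ‖y'‖) ^ n ≤ g0 y' * (1 + (k:ℝ)) ^ n :=
          mul_le_mul_of_nonneg_left (pow_le_pow_left₀ (by positivity) (by linarith) n)
            (hg0nonneg y')
      _ = (1 + (k:ℝ)) ^ n * g0 y' := by ring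
  set Ik : ℝ := ∫ y' in s, |f y'| with hIkdef
  have hIk0 : 0 ≤ Ik := setIntegral_nonneg hs fun y' _ => abs_nonneg _
  set M : ℝ := max 1 (4 * Ik / (surfaceArea n * c)) with hMdef
  have hM1 : (1:ℝ) ≤ M := le_max_left _ _
  have hMI : 2 / surfaceArea n * Ik ≤ c / 2 * M := by
    have he : c / 2 * (4 * Ik / (surfaceArea n * c)) = 2 / surfaceArea n * Ik := by
      field_simp
      ring
    calc 2 / surfaceArea n * Ik = c / 2 * (4 * Ik / (surfaceArea n * c)) := he.symm
      _ ≤ c / 2 * M := mul_le_mul_of_nonneg_left (le_max_right _ _) (by positivity)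
  rw [eventually_inf_principal]
  filter_upwards [preimage_mem_comap (Ici_mem_atTop M)] with x hxM hxH
  have hxM' : M ≤ ‖x‖ := hxM
  have ht : 0 < lastCoord x := hxH
  have hx1 : (1:ℝ) ≤ ‖x‖ := le_trans hM1 hxM'
  have htr : (0:ℝ) ≤ lastCoord x ^ (1 - (n:ℝ)) := Real.rpow_nonneg ht.le _
  have hgx0 : 0 ≤ lastCoord x ^ (1 - (n:ℝ)) * ‖x‖ ^ n := by positivity
  -- the dominating bound
  have hPtail : ∀ y', halfSpacePoissonKernel n x y' * |f y'| ≤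
      (2 * 3 ^ n / surfaceArea n * (lastCoord x ^ (1 - (n:ℝ)) * ‖x‖ ^ n)) * g0 y' := by
    intro y'
    have h1 := mul_le_mul_of_nonneg_right (kernel_tail hn0 hxH hx1 y') (abs_nonneg (f y'))
    refine h1.trans_eq ?_
    rw [hg0def]
    ring
  have hPf_meas : Measurable (fun y' => halfSpacePoissonKernel n x y' * |f y'|) :=
    (measurable_kernel hn0 x).mul hf.abs
  have hPf_nonneg : ∀ y', 0 ≤ halfSpacePoissonKernel n x y' * |f y'| :=
    fun y' => mul_nonneg (kernel_nonneg hn0 hxH y') (abs_nonneg _)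
  have hPf_int : Integrable (fun y' => halfSpacePoissonKernel n x y' * |f y'|) := by
    refine Integrable.mono'
      (hg0int.const_mul (2 * 3 ^ n / surfaceArea n * (lastCoord x ^ (1 - (n:ℝ)) * ‖x‖ ^ n)))
      hPf_meas.aestronglyMeasurable (ae_of_all _ fun y' => ?_)
    rw [Real.norm_eq_abs, abs_of_nonneg (hPf_nonneg y')]
    exact hPtail y'
  have step2 : ‖poissonIntegral n f x‖ ≤ ∫ y', halfSpacePoissonKernel n x y' * |f y'| := by
    refine (norm_integral_le_integral_norm _).trans_eq ?_
    refine integral_congr_ae (ae_of_all _ fun y' => ?_)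
    simp only [Real.norm_eq_abs, abs_mul, abs_of_nonneg (kernel_nonneg hn0 hxH y')]
  have step3 : (∫ y', halfSpacePoissonKernel n x y' * |f y'|) =
      (∫ y' in s, halfSpacePoissonKernel n x y' * |f y'|) +
        ∫ y' in sᶜ, halfSpacePoissonKernel n x y' * |f y'| :=
    (integral_add_compl hs hPf_int).symm
  have step4 : (∫ y' in s, halfSpacePoissonKernel n x y' * |f y'|) ≤
      (2 / surfaceArea n * lastCoord x ^ (1 - (n:ℝ))) * Ik := by
    calc (∫ y' in s, halfSpacePoissonKernel n x y' * |f y'|)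
        ≤ ∫ y' in s, (2 / surfaceArea n * lastCoord x ^ (1 - (n:ℝ))) * |f y'| := by
          refine setIntegral_mono_on hPf_int.integrableOn (hfk_int.const_mul _) hs
            fun y' _ => ?_
          exact mul_le_mul_of_nonneg_right (kernel_near hn0 hxH y') (abs_nonneg _)
      _ = (2 / surfaceArea n * lastCoord x ^ (1 - (n:ℝ))) * Ik := by
          rw [integral_const_mul]
  have step5 : (∫ y' in sᶜ, halfSpacePoissonKernel n x y' * |f y'|) ≤
      (2 * 3 ^ n / surfaceArea n * (lastCoord x ^ (1 - (n:ℝ)) * ‖x‖ ^ n)) *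
        ∫ y' in sᶜ, g0 y' := by
    calc (∫ y' in sᶜ, halfSpacePoissonKernel n x y' * |f y'|)
        ≤ ∫ y' in sᶜ, (2 * 3 ^ n / surfaceArea n *
            (lastCoord x ^ (1 - (n:ℝ)) * ‖x‖ ^ n)) * g0 y' :=
          setIntegral_mono hPf_int.integrableOn ((hg0int.const_mul _).integrableOn)
            hPtail
      _ = _ := by rw [integral_const_mul]
  have hx_pow : M ≤ ‖x‖ ^ n := by
    calc M ≤ M ^ n := le_self_pow₀ (by linarith) (by omega)
      _ ≤ ‖x‖ ^ n := pow_le_pow_left₀ (by linarith) hxM' n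
  have step6 : (2 / surfaceArea n * lastCoord x ^ (1 - (n:ℝ))) * Ik ≤
      c / 2 * (lastCoord x ^ (1 - (n:ℝ)) * ‖x‖ ^ n) := by
    have h1 : 2 / surfaceArea n * Ik ≤ c / 2 * ‖x‖ ^ n :=
      hMI.trans (mul_le_mul_of_nonneg_left hx_pow (by positivity))
    calc (2 / surfaceArea n * lastCoord x ^ (1 - (n:ℝ))) * Ik
        = lastCoord x ^ (1 - (n:ℝ)) * (2 / surfaceArea n * Ik) := by ring
      _ ≤ lastCoord x ^ (1 - (n:ℝ)) * (c / 2 * ‖x‖ ^ n) :=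
          mul_le_mul_of_nonneg_left h1 htr
      _ = c / 2 * (lastCoord x ^ (1 - (n:ℝ)) * ‖x‖ ^ n) := by ring
  have step7 : (2 * 3 ^ n / surfaceArea n * (lastCoord x ^ (1 - (n:ℝ)) * ‖x‖ ^ n)) *
      (∫ y' in sᶜ, g0 y') ≤ c / 2 * (lastCoord x ^ (1 - (n:ℝ)) * ‖x‖ ^ n) := by
    calc (2 * 3 ^ n / surfaceArea n * (lastCoord x ^ (1 - (n:ℝ)) * ‖x‖ ^ n)) *
        (∫ y' in sᶜ, g0 y')
        ≤ (2 * 3 ^ n / surfaceArea n * (lastCoord x ^ (1 - (n:ℝ)) * ‖x‖ ^ n)) *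
          (c / (2 * (2 * 3 ^ n / surfaceArea n))) :=
          mul_le_mul_of_nonneg_left hk.le (by positivity)
      _ = (lastCoord x ^ (1 - (n:ℝ)) * ‖x‖ ^ n) *
          ((2 * 3 ^ n / surfaceArea n) * (c / (2 * (2 * 3 ^ n / surfaceArea n)))) := by ring
      _ = c / 2 * (lastCoord x ^ (1 - (n:ℝ)) * ‖x‖ ^ n) := by
          have hωne : surfaceArea n ≠ 0 := ne_of_gt hω
          have h3ne : (3:ℝ) ^ n ≠ 0 := by positivity
          field_simp
  have hRHS : ‖lastCoord x ^ (1 - (n:ℝ)) * ‖x‖ ^ (n:ℝ)‖ =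
      lastCoord x ^ (1 - (n:ℝ)) * ‖x‖ ^ n := by
    rw [Real.rpow_natCast, Real.norm_eq_abs, abs_of_nonneg hgx0]
  calc ‖poissonIntegral n f x‖ ≤ ∫ y', halfSpacePoissonKernel n x y' * |f y'| := step2
    _ = _ := step3
    _ ≤ c / 2 * (lastCoord x ^ (1 - (n:ℝ)) * ‖x‖ ^ n) +
        c / 2 * (lastCoord x ^ (1 - (n:ℝ)) * ‖x‖ ^ n) :=
        add_le_add (step4.trans step6) (step5.trans step7)
    _ = c * (lastCoord x ^ (1 - (n:ℝ)) * ‖x‖ ^ n) := by ring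
    _ = c * ‖lastCoord x ^ (1 - (n:ℝ)) * ‖x‖ ^ (n:ℝ)‖ := by rw [hRHS]
end

section
/- Let μ be a positive Borel measure on R^n with μ(R^n) < ∞, let β ≥ 0, and let λ ≥ 5^β μ(R^n). Set E(λ) = { x ∈ R^n : |x| ≥ 2 and M(dμ)(x) > λ/|x|^β }. Then there exist points x_j ∈ E(λ) and radii ρ_j > 0 (j = 1, 2, …) such that E(λ) ⊂ ∪_{j=1}^∞ B(x_j, ρ_j) and Σ_{j=1}^∞ ρ_j^β/|x_j|^β ≤ 3·5^β μ(R^n)/λ. -/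
open MeasureTheory Filter Metric Asymptotics ENNReal

/-- Lemma 1 of the paper: a Vitali-type covering of the set
`E(λ) = {x : |x| ≥ 2, M(dμ)(x) > λ/|x|^β}` by countably many balls whose normalized
radii `(ρ_j/|x_j|)^β` have sum at most `3·5^β μ(ℝⁿ)/λ`. -/
theorem stmt7 (n : ℕ) (μ : Measure (EuclideanSpace ℝ (Fin n)))
    (hμfin : μ Set.univ < ⊤) (β lam : ℝ) (hβ : 0 ≤ β)
    (hlam : 5 ^ β * (μ Set.univ).toReal ≤ lam) :
    ∃ (ι : Type) (_ : Countable ι) (c : ι → EuclideanSpace ℝ (Fin n)) (ρ : ι → ℝ),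
      (∀ j, 2 ≤ ‖c j‖ ∧ ENNReal.ofReal (lam / ‖c j‖ ^ β) < maxFn μ β (c j)) ∧
      (∀ j, 0 < ρ j) ∧
      ({x : EuclideanSpace ℝ (Fin n) | 2 ≤ ‖x‖ ∧
          ENNReal.ofReal (lam / ‖x‖ ^ β) < maxFn μ β x} ⊆
        ⋃ j, Metric.ball (c j) (ρ j)) ∧
      Summable (fun j => ρ j ^ β / ‖c j‖ ^ β) ∧
      ∑' j, ρ j ^ β / ‖c j‖ ^ β ≤ 3 * 5 ^ β * (μ Set.univ).toReal / lam := by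
    classical
  haveI : IsFiniteMeasure μ := ⟨hμfin⟩
  set E : Set (EuclideanSpace ℝ (Fin n)) :=
    {x | 2 ≤ ‖x‖ ∧ ENNReal.ofReal (lam / ‖x‖ ^ β) < maxFn μ β x} with hEdef
  have hlam0 : 0 ≤ lam :=
    le_trans (mul_nonneg (Real.rpow_nonneg (by norm_num) β) ENNReal.toReal_nonneg) hlam
  -- the degenerate case where E is empty
  have empty_case : E ⊆ ∅ →
      ∃ (ι : Type) (_ : Countable ι) (c : ι → EuclideanSpace ℝ (Fin n)) (ρ : ι → ℝ),
      (∀ j, 2 ≤ ‖c j‖ ∧ ENNReal.ofReal (lam / ‖c j‖ ^ β) < maxFn μ β (c j)) ∧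
      (∀ j, 0 < ρ j) ∧
      (E ⊆ ⋃ j, Metric.ball (c j) (ρ j)) ∧
      Summable (fun j => ρ j ^ β / ‖c j‖ ^ β) ∧
      ∑' j, ρ j ^ β / ‖c j‖ ^ β ≤ 3 * 5 ^ β * (μ Set.univ).toReal / lam := by
    intro hEe
    refine ⟨Empty, inferInstance, fun j => j.elim, fun j => j.elim,
      fun j => j.elim, fun j => j.elim, hEe.trans (Set.empty_subset _), ?_, ?_⟩
    · exact summable_empty
    · rw [tsum_empty]
      apply div_nonneg _ hlam0
      have : (0:ℝ) ≤ 5 ^ β := Real.rpow_nonneg (by norm_num) β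
      have := ENNReal.toReal_nonneg (a := μ Set.univ)
      positivity
  rcases hβ.eq_or_lt with hβ0 | hβpos
  · -- β = 0
    apply empty_case
    intro x hx
    exfalso
    obtain ⟨hx1, hx2⟩ := hx
    have h1 : maxFn μ β x ≤ ENNReal.ofReal lam := by
      rw [maxFn]
      refine iSup₂_le fun r hr => ?_
      rw [show r ^ β = 1 by rw [← hβ0, Real.rpow_zero], ENNReal.ofReal_one, div_one]
      calc μ (Metric.ball x r) ≤ μ Set.univ := measure_mono (Set.subset_univ _)
        _ = ENNReal.ofReal (μ Set.univ).toReal := (ENNReal.ofReal_toReal hμfin.ne).symm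
        _ ≤ ENNReal.ofReal lam := by
            apply ENNReal.ofReal_le_ofReal
            have : (5:ℝ) ^ β = 1 := by rw [← hβ0, Real.rpow_zero]
            nlinarith [hlam]
    rw [show (‖x‖:ℝ) ^ β = 1 by rw [← hβ0, Real.rpow_zero], div_one] at hx2
    exact absurd (hx2.trans_le h1) (lt_irrefl _)
  rcases eq_or_ne (μ Set.univ) 0 with hμ0 | hμ0
  · -- μ = 0
    apply empty_case
    intro x hx
    exfalso
    obtain ⟨hx1, hx2⟩ := hx
    have h1 : maxFn μ β x ≤ 0 := by
      rw [maxFn]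
      refine iSup₂_le fun r hr => ?_
      have : μ (Metric.ball x r) = 0 :=
        le_antisymm (le_trans (measure_mono (Set.subset_univ _)) hμ0.le) zero_le
      rw [this, ENNReal.zero_div]
    exact absurd (hx2.trans_le h1) (ENNReal.not_lt_zero)
  -- main case
  have hμpos : 0 < (μ Set.univ).toReal := ENNReal.toReal_pos hμ0 hμfin.ne
  have h5β : (0:ℝ) < 5 ^ β := Real.rpow_pos_of_pos (by norm_num) β
  have hlampos : 0 < lam := lt_of_lt_of_le (mul_pos h5β hμpos) hlam
  -- choose radii
  have hex : ∀ x : EuclideanSpace ℝ (Fin n), ∃ rr : ℝ, x ∈ E →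
      0 < rr ∧ ENNReal.ofReal (lam * rr ^ β / ‖x‖ ^ β) < μ (Metric.ball x rr) ∧
        rr ≤ ‖x‖ / 5 := by
    intro x
    by_cases hx : x ∈ E
    · obtain ⟨hx1, hx2⟩ := hx
      have hxpos : (0:ℝ) < ‖x‖ := by linarith
      have hXβ : (0:ℝ) < ‖x‖ ^ β := Real.rpow_pos_of_pos hxpos β
      rw [maxFn, lt_iSup_iff] at hx2
      obtain ⟨rr, hx2⟩ := hx2
      rw [lt_iSup_iff] at hx2
      obtain ⟨hrr, hx2⟩ := hx2
      have hrβ : (0:ℝ) < rr ^ β := Real.rpow_pos_of_pos hrr β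
      have hball : ENNReal.ofReal (lam * rr ^ β / ‖x‖ ^ β) < μ (Metric.ball x rr) := by
        rw [ENNReal.lt_div_iff_mul_lt (Or.inl (ENNReal.ofReal_pos.mpr hrβ).ne') 
            (Or.inl ENNReal.ofReal_ne_top)] at hx2
        calc ENNReal.ofReal (lam * rr ^ β / ‖x‖ ^ β)
            = ENNReal.ofReal (lam / ‖x‖ ^ β * rr ^ β) := by rw [div_mul_eq_mul_div, mul_div_right_comm]
          _ = ENNReal.ofReal (lam / ‖x‖ ^ β) * ENNReal.ofReal (rr ^ β) :=
              ENNReal.ofReal_mul (by positivity)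
          _ < μ (Metric.ball x rr) := hx2
      refine ⟨rr, fun _ => ⟨hrr, hball, ?_⟩⟩
      -- rr ≤ ‖x‖ / 5
      have hle : lam * rr ^ β / ‖x‖ ^ β ≤ (μ Set.univ).toReal := by
        have h1 : ENNReal.ofReal (lam * rr ^ β / ‖x‖ ^ β) ≤
            ENNReal.ofReal (μ Set.univ).toReal := by
          rw [ENNReal.ofReal_toReal hμfin.ne]
          exact le_trans hball.le (measure_mono (Set.subset_univ _))
        exact (ENNReal.ofReal_le_ofReal_iff ENNReal.toReal_nonneg).mp h1
      have h2 : (μ Set.univ).toReal ≤ lam / 5 ^ β := by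
        rw [le_div_iff₀ h5β]; nlinarith [hlam]
      have h3 : lam * rr ^ β ≤ lam / 5 ^ β * ‖x‖ ^ β := by
        rw [div_le_iff₀ hXβ] at hle
        linarith [hle, mul_le_mul_of_nonneg_right h2 hXβ.le]
      have h4 : rr ^ β ≤ ‖x‖ ^ β / 5 ^ β := by
        have : lam * rr ^ β ≤ lam * (‖x‖ ^ β / 5 ^ β) := by
          calc lam * rr ^ β ≤ lam / 5 ^ β * ‖x‖ ^ β := h3
            _ = lam * (‖x‖ ^ β / 5 ^ β) := by ring
        exact le_of_mul_le_mul_left this hlampos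
      by_contra hcon
      push_neg at hcon
      have h5 : (‖x‖ / 5) ^ β < rr ^ β := Real.rpow_lt_rpow (by positivity) hcon hβpos
      rw [Real.div_rpow (norm_nonneg x) (by norm_num)] at h5
      linarith
    · exact ⟨1, fun h => absurd h hx⟩
  choose r hr using hex
  -- annuli
  set A : ℕ → Set (EuclideanSpace ℝ (Fin n)) :=
    fun k => {x | x ∈ E ∧ (2:ℝ)^k ≤ ‖x‖ ∧ ‖x‖ < 2^(k+1)} with hAdef
  have hAE : ∀ k, ∀ x ∈ A k, x ∈ E := fun k x hx => hx.1
  -- Vitali per annulus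
  have vit : ∀ k : ℕ, ∃ u ⊆ A k,
      u.PairwiseDisjoint (fun a => Metric.closedBall a (r a)) ∧
      ∀ a ∈ A k, ∃ b ∈ u,
        (Metric.closedBall a (r a) ∩ Metric.closedBall b (r b)).Nonempty ∧
        r a ≤ 3/2 * r b := by
    intro k
    apply Vitali.exists_disjoint_subfamily_covering_enlargement
      (fun a => Metric.closedBall a (r a)) (A k) r (3/2) (by norm_num)
      (fun a ha => ((hr a (hAE k a ha)).1).le) (2^(k+1))
      (fun a ha => ?_) (fun a ha => ⟨a, Metric.mem_closedBall_self ((hr a (hAE k a ha)).1).le⟩)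
    have h1 := (hr a (hAE k a ha)).2.2
    have h2 := ha.2.2
    have : (0:ℝ) < 2^(k+1) := by positivity
    linarith
  choose u hu_sub hu_disj hu_cov using vit
  -- positivity of the measures of the chosen balls
  have hrpos : ∀ k, ∀ b ∈ u k, 0 < r b := fun k b hb => (hr b (hAE k b (hu_sub k hb))).1
  have hballpos : ∀ k, ∀ b ∈ u k, 0 < μ (Metric.closedBall b (r b)) := by
    intro k b hb
    have h := (hr b (hAE k b (hu_sub k hb))).2.1
    exact lt_of_le_of_lt zero_le
      (h.trans_le (measure_mono Metric.ball_subset_closedBall))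
  -- countability of u k
  have hu_cnt : ∀ k, (u k).Countable := by
    intro k
    have hdisj : Pairwise (Function.onFun Disjoint fun b : ↥(u k) =>
        Metric.closedBall (b : EuclideanSpace ℝ (Fin n)) (r b)) := by
      intro b b' hne
      exact hu_disj k b.2 b'.2 (Subtype.coe_injective.ne hne)
    have hcnt := MeasureTheory.Measure.countable_meas_pos_of_disjoint_iUnion
      (μ := μ) (fun b : ↥(u k) => measurableSet_closedBall) hdisj
    have huniv : {i : ↥(u k) |
        0 < μ (Metric.closedBall (i : EuclideanSpace ℝ (Fin n)) (r i))} = Set.univ := by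
      ext b
      simp only [Set.mem_setOf_eq, Set.mem_univ, iff_true]
      exact hballpos k b b.2
    rw [huniv, Set.countable_univ_iff] at hcnt
    exact Set.countable_coe_iff.mpr hcnt
  haveI : ∀ k, Countable ↥(u k) := fun k => (hu_cnt k).to_subtype
  have hjE : ∀ (k : ℕ) (b : ↥(u k)), (b : EuclideanSpace ℝ (Fin n)) ∈ E :=
    fun k b => hAE k _ (hu_sub k b.2)
  -- shells
  set Sh : ℕ → Set (EuclideanSpace ℝ (Fin n)) :=
    fun k => {y | (2:ℝ)^k * (4/5) ≤ ‖y‖ ∧ ‖y‖ ≤ 2^k * (12/5)} with hShdef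
  have hShMeas : ∀ k, MeasurableSet (Sh k) := by
    intro k
    have he : Sh k = (fun y : EuclideanSpace ℝ (Fin n) => ‖y‖) ⁻¹'
        (Set.Icc ((2:ℝ)^k * (4/5)) (2^k * (12/5))) := rfl
    rw [he]
    exact measurable_norm measurableSet_Icc
  have hBallSh : ∀ k, ∀ a ∈ A k, Metric.closedBall a (r a) ⊆ Sh k := by
    intro k a ha y hy
    have h5 := (hr a ha.1).2.2
    have hra := (hr a ha.1).1
    rw [Metric.mem_closedBall] at hy
    have habs : |‖y‖ - ‖a‖| ≤ dist y a := by
      rw [dist_eq_norm]; exact abs_norm_sub_norm_le y a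
    obtain ⟨h6a, h6b⟩ := abs_le.mp habs
    have hk1 : (2:ℝ)^k ≤ ‖a‖ := ha.2.1
    have hk2 : ‖a‖ < 2^(k+1) := ha.2.2
    have hp : (2:ℝ)^(k+1) = 2^k * 2 := pow_succ 2 k
    constructor
    · linarith
    · linarith
  have hgen : ∀ i j : ℕ, i + 2 ≤ j → Disjoint (Sh i) (Sh j) := by
    intro i j hij
    rw [Set.disjoint_left]
    intro y hy1 hy2
    have h1 : (2:ℝ)^(i+2) ≤ 2^j := pow_le_pow_right₀ (by norm_num) hij
    have h2 : (2:ℝ)^(i+2) = 4 * 2^i := by ring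
    have h3 := hy1.2
    have h4 := hy2.1
    have h5 : (0:ℝ) < 2^i := by positivity
    linarith
  have hShSum : ∑' k, μ (Sh k) ≤ 2 * μ Set.univ := by
    have heven : ∑' j : ℕ, μ (Sh (2*j)) ≤ μ Set.univ := by
      have hpair : Pairwise (Function.onFun Disjoint fun j : ℕ => Sh (2*j)) := by
        intro i j hne
        rcases hne.lt_or_gt with h | h
        · exact hgen _ _ (by omega)
        · exact (hgen _ _ (by omega)).symm
      rw [← measure_iUnion hpair (fun j => hShMeas (2*j))]
      exact measure_mono (Set.subset_univ _)
    have hodd : ∑' j : ℕ, μ (Sh (2*j+1)) ≤ μ Set.univ := by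
      have hpair : Pairwise (Function.onFun Disjoint fun j : ℕ => Sh (2*j+1)) := by
        intro i j hne
        rcases hne.lt_or_gt with h | h
        · exact hgen _ _ (by omega)
        · exact (hgen _ _ (by omega)).symm
      rw [← measure_iUnion hpair (fun j => hShMeas (2*j+1))]
      exact measure_mono (Set.subset_univ _)
    calc ∑' k, μ (Sh k) = (∑' j : ℕ, μ (Sh (2*j))) + ∑' j : ℕ, μ (Sh (2*j+1)) :=
        (tsum_even_add_odd ENNReal.summable ENNReal.summable).symm
      _ ≤ μ Set.univ + μ Set.univ := add_le_add heven hodd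
      _ = 2 * μ Set.univ := (two_mul _).symm
  have hinner : ∀ k : ℕ, ∑' b : ↥(u k),
      μ (Metric.closedBall (b : EuclideanSpace ℝ (Fin n)) (r b)) ≤ μ (Sh k) := by
    intro k
    rw [← measure_biUnion (hu_cnt k) (hu_disj k) (fun b _ => measurableSet_closedBall)]
    exact measure_mono (Set.iUnion₂_subset fun b hb => hBallSh k b (hu_sub k hb))
  have key : ∑' (j : (k : ℕ) × ↥(u k)),
      ENNReal.ofReal (lam * r (j.2 : EuclideanSpace ℝ (Fin n)) ^ β
        / ‖(j.2 : EuclideanSpace ℝ (Fin n))‖ ^ β) ≤ 2 * μ Set.univ := by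
    calc ∑' (j : (k : ℕ) × ↥(u k)), ENNReal.ofReal
          (lam * r (j.2 : EuclideanSpace ℝ (Fin n)) ^ β
            / ‖(j.2 : EuclideanSpace ℝ (Fin n))‖ ^ β)
        ≤ ∑' (j : (k : ℕ) × ↥(u k)),
            μ (Metric.closedBall (j.2 : EuclideanSpace ℝ (Fin n)) (r j.2)) :=
          ENNReal.tsum_le_tsum fun j =>
            ((hr _ (hjE j.1 j.2)).2.1.trans_le
              (measure_mono Metric.ball_subset_closedBall)).le
      _ = ∑' (k : ℕ) (b : ↥(u k)),
            μ (Metric.closedBall (b : EuclideanSpace ℝ (Fin n)) (r b)) :=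
          ENNReal.tsum_sigma' _
      _ ≤ ∑' k : ℕ, μ (Sh k) := ENNReal.tsum_le_tsum hinner
      _ ≤ 2 * μ Set.univ := hShSum
  -- conversions to real
  have htnn : ∀ (j : (k : ℕ) × ↥(u k)),
      (0:ℝ) ≤ r (j.2 : EuclideanSpace ℝ (Fin n)) ^ β
        / ‖(j.2 : EuclideanSpace ℝ (Fin n))‖ ^ β := by
    intro j
    have := (hr _ (hjE j.1 j.2)).1
    positivity
  have hofmul : ∀ (j : (k : ℕ) × ↥(u k)),
      ENNReal.ofReal (lam * r (j.2 : EuclideanSpace ℝ (Fin n)) ^ β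
        / ‖(j.2 : EuclideanSpace ℝ (Fin n))‖ ^ β)
      = ENNReal.ofReal lam * ENNReal.ofReal
          (r (j.2 : EuclideanSpace ℝ (Fin n)) ^ β
            / ‖(j.2 : EuclideanSpace ℝ (Fin n))‖ ^ β) := by
    intro j
    rw [← ENNReal.ofReal_mul hlampos.le, mul_div_assoc]
  have hfin2 : (2 * μ Set.univ / ENNReal.ofReal lam) ≠ ∞ :=
    (ENNReal.div_lt_top (ENNReal.mul_ne_top (by norm_num) hμfin.ne)
      (ENNReal.ofReal_pos.mpr hlampos).ne').ne
  have hSle : ∑' (j : (k : ℕ) × ↥(u k)),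
      ENNReal.ofReal (r (j.2 : EuclideanSpace ℝ (Fin n)) ^ β
        / ‖(j.2 : EuclideanSpace ℝ (Fin n))‖ ^ β) ≤
      2 * μ Set.univ / ENNReal.ofReal lam := by
    rw [ENNReal.le_div_iff_mul_le (Or.inl (ENNReal.ofReal_pos.mpr hlampos).ne')
      (Or.inl ENNReal.ofReal_ne_top), mul_comm, ← ENNReal.tsum_mul_left]
    calc ∑' (j : (k : ℕ) × ↥(u k)), ENNReal.ofReal lam *
          ENNReal.ofReal (r (j.2 : EuclideanSpace ℝ (Fin n)) ^ β
            / ‖(j.2 : EuclideanSpace ℝ (Fin n))‖ ^ β)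
        = ∑' (j : (k : ℕ) × ↥(u k)),
            ENNReal.ofReal (lam * r (j.2 : EuclideanSpace ℝ (Fin n)) ^ β
              / ‖(j.2 : EuclideanSpace ℝ (Fin n))‖ ^ β) :=
          tsum_congr fun j => (hofmul j).symm
      _ ≤ 2 * μ Set.univ := key
  have hS_ne : ∑' (j : (k : ℕ) × ↥(u k)),
      ENNReal.ofReal (r (j.2 : EuclideanSpace ℝ (Fin n)) ^ β
        / ‖(j.2 : EuclideanSpace ℝ (Fin n))‖ ^ β) ≠ ∞ :=
    ne_top_of_le_ne_top hfin2 hSle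
  have hsum0 : Summable (fun j : (k : ℕ) × ↥(u k) =>
      r (j.2 : EuclideanSpace ℝ (Fin n)) ^ β
        / ‖(j.2 : EuclideanSpace ℝ (Fin n))‖ ^ β) := by
    have h := ENNReal.summable_toReal hS_ne
    exact h.congr fun j => ENNReal.toReal_ofReal (htnn j)
  have htsum0 : ∑' (j : (k : ℕ) × ↥(u k)),
      r (j.2 : EuclideanSpace ℝ (Fin n)) ^ β
        / ‖(j.2 : EuclideanSpace ℝ (Fin n))‖ ^ β ≤ 2 * (μ Set.univ).toReal / lam := by
    have h1 : ∑' (j : (k : ℕ) × ↥(u k)),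
        r (j.2 : EuclideanSpace ℝ (Fin n)) ^ β
          / ‖(j.2 : EuclideanSpace ℝ (Fin n))‖ ^ β
        = (∑' (j : (k : ℕ) × ↥(u k)),
            ENNReal.ofReal (r (j.2 : EuclideanSpace ℝ (Fin n)) ^ β
              / ‖(j.2 : EuclideanSpace ℝ (Fin n))‖ ^ β)).toReal := by
      rw [ENNReal.tsum_toReal_eq (fun j => ENNReal.ofReal_ne_top)]
      exact tsum_congr fun j => (ENNReal.toReal_ofReal (htnn j)).symm
    rw [h1]
    calc (∑' (j : (k : ℕ) × ↥(u k)),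
          ENNReal.ofReal (r (j.2 : EuclideanSpace ℝ (Fin n)) ^ β
            / ‖(j.2 : EuclideanSpace ℝ (Fin n))‖ ^ β)).toReal
        ≤ (2 * μ Set.univ / ENNReal.ofReal lam).toReal := ENNReal.toReal_mono hfin2 hSle
      _ = 2 * (μ Set.univ).toReal / lam := by
          rw [ENNReal.toReal_div, ENNReal.toReal_mul, ENNReal.toReal_ofReal hlampos.le]
          norm_num
  have hterm : ∀ (j : (k : ℕ) × ↥(u k)),
      (3 * r (j.2 : EuclideanSpace ℝ (Fin n))) ^ β
        / ‖(j.2 : EuclideanSpace ℝ (Fin n))‖ ^ β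
      = 3 ^ β * (r (j.2 : EuclideanSpace ℝ (Fin n)) ^ β
          / ‖(j.2 : EuclideanSpace ℝ (Fin n))‖ ^ β) := by
    intro j
    rw [Real.mul_rpow (by norm_num) (hr _ (hjE j.1 j.2)).1.le, mul_div_assoc]
  refine ⟨(k : ℕ) × ↥(u k), inferInstance,
    fun j => (j.2 : EuclideanSpace ℝ (Fin n)),
    fun j => 3 * r (j.2 : EuclideanSpace ℝ (Fin n)),
    fun j => hjE j.1 j.2,
    fun j => mul_pos (by norm_num) (hr _ (hjE j.1 j.2)).1, ?_, ?_, ?_⟩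
  · -- covering
    intro x hx
    have hx' : x ∈ E := hx
    have hx1 : 2 ≤ ‖x‖ := hx'.1
    have hfl2 : 2 ≤ ⌊‖x‖⌋₊ := Nat.le_floor (by exact_mod_cast hx1)
    set m := Nat.log 2 ⌊‖x‖⌋₊ with hm
    have hlow : (2:ℝ)^m ≤ ‖x‖ := by
      have h1 : (2:ℕ)^m ≤ ⌊‖x‖⌋₊ := Nat.pow_log_le_self 2 (by omega)
      have h2 : (⌊‖x‖⌋₊ : ℝ) ≤ ‖x‖ := Nat.floor_le (by linarith)
      calc (2:ℝ)^m = ((2^m : ℕ) : ℝ) := by push_cast; ring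
        _ ≤ (⌊‖x‖⌋₊:ℝ) := by exact_mod_cast h1
        _ ≤ ‖x‖ := h2
    have hhigh : ‖x‖ < 2^(m+1) := by
      have h1 : ⌊‖x‖⌋₊ < 2^(m+1) := Nat.lt_pow_succ_log_self (by norm_num) _
      have h2 : ‖x‖ < (⌊‖x‖⌋₊:ℝ) + 1 := Nat.lt_floor_add_one _
      have h3 : (⌊‖x‖⌋₊:ℝ) + 1 ≤ ((2:ℝ))^(m+1) := by
        have h4 : ⌊‖x‖⌋₊ + 1 ≤ 2^(m+1) := Nat.succ_le_of_lt h1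
        calc (⌊‖x‖⌋₊:ℝ) + 1 = ((⌊‖x‖⌋₊ + 1 : ℕ):ℝ) := by push_cast; ring
          _ ≤ ((2^(m+1):ℕ):ℝ) := by exact_mod_cast h4
          _ = (2:ℝ)^(m+1) := by push_cast; ring
      linarith
    have hxA : x ∈ A m := ⟨hx', hlow, hhigh⟩
    obtain ⟨b, hbu, hnon, hle⟩ := hu_cov m x hxA
    rw [Set.mem_iUnion]
    refine ⟨⟨m, ⟨b, hbu⟩⟩, ?_⟩
    obtain ⟨y, hy1, hy2⟩ := hnon
    rw [Metric.mem_closedBall] at hy1 hy2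
    have hrb : 0 < r b := hrpos m b hbu
    have hdb : dist x b ≤ r x + r b := by
      have ht := dist_triangle x y b
      have h4 : dist x y ≤ r x := by rw [dist_comm]; exact hy1
      linarith
    exact Metric.mem_ball.mpr (by linarith : dist x b < 3 * r b)
  · -- summable
    exact (summable_congr hterm).mpr (hsum0.mul_left _)
  · -- tsum bound
    calc ∑' (j : (k : ℕ) × ↥(u k)),
        (3 * r (j.2 : EuclideanSpace ℝ (Fin n))) ^ β
          / ‖(j.2 : EuclideanSpace ℝ (Fin n))‖ ^ β
        = ∑' (j : (k : ℕ) × ↥(u k)), 3 ^ β *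
            (r (j.2 : EuclideanSpace ℝ (Fin n)) ^ β
              / ‖(j.2 : EuclideanSpace ℝ (Fin n))‖ ^ β) := tsum_congr hterm
      _ = 3 ^ β * ∑' (j : (k : ℕ) × ↥(u k)),
            (r (j.2 : EuclideanSpace ℝ (Fin n)) ^ β
              / ‖(j.2 : EuclideanSpace ℝ (Fin n))‖ ^ β) := tsum_mul_left
      _ ≤ 3 ^ β * (2 * (μ Set.univ).toReal / lam) :=
          mul_le_mul_of_nonneg_left htsum0 (Real.rpow_nonneg (by norm_num) β)
      _ ≤ 3 * 5 ^ β * (μ Set.univ).toReal / lam := by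
          have h35 : (3:ℝ) ^ β ≤ 5 ^ β := Real.rpow_le_rpow (by norm_num) (by norm_num) hβ
          have hMl : 0 ≤ (μ Set.univ).toReal / lam :=
            div_nonneg ENNReal.toReal_nonneg hlampos.le
          have e1 : (3:ℝ)^β * (2 * (μ Set.univ).toReal / lam)
              = (2*3^β) * ((μ Set.univ).toReal / lam) := by ring
          have e2 : (3:ℝ) * 5^β * (μ Set.univ).toReal / lam
              = (3*5^β) * ((μ Set.univ).toReal / lam) := by ring
          rw [e1, e2]
          exact mul_le_mul_of_nonneg_right (by linarith) hMl
end

section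
/- Let n ≥ 3, let 1 < p < ∞ with 1/p + 1/q = 1, and let γ < (n−1) + p. Let f be a Lebesgue measurable function on R^{n−1} with ∫_{R^{n−1}} |f(y')|^p/(1+|y'|)^γ dy' < ∞. For x ∈ H with |x| ≥ 2 define v_3(x) = ∫_{{y' ∈ R^{n−1} : |y'| > 2|x|}} P(x, y') f(y') dy'. Then there is a constant A depending only on n, p, γ such that |v_3(x)| ≤ A x_n |x|^{γ/p + (n−1)/q − n} ( ∫_{|y'| > 2|x|} |f(y')|^p/|y'|^γ dy' )^{1/p}, and consequently v_3(x) = o( x_n |x|^{γ/p + (n−1)/q − n} ) as |x| → ∞, x ∈ H. -/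
open MeasureTheory Filter Metric Asymptotics ENNReal

open Topology

/-- dyadic tail bound -/
lemma tail_bound (m : ℕ) (hm : 0 < m) (e : ℝ) (he : e + m < 0) :
    ∃ C : ℝ, 0 < C ∧ ∀ R : ℝ, 1 ≤ R →
      (∫⁻ y in {y : EuclideanSpace ℝ (Fin m) | R < ‖y‖}, ENNReal.ofReal (‖y‖ ^ e)) ≤
        ENNReal.ofReal (C * R ^ (e + (m : ℝ))) := by
  set V : ℝ := (volume (ball (0 : EuclideanSpace ℝ (Fin m)) 1)).toReal with hV
  have hVfin : volume (ball (0 : EuclideanSpace ℝ (Fin m)) 1) ≠ ⊤ :=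
    measure_ball_lt_top.ne
  have hVpos : 0 < V := ENNReal.toReal_pos (measure_ball_pos volume _ one_pos).ne' hVfin
  set t : ℝ := (2 : ℝ) ^ (e + (m : ℝ)) with ht
  have htpos : 0 < t := Real.rpow_pos_of_pos two_pos _
  have htlt : t < 1 := Real.rpow_lt_one_of_one_lt_of_neg one_lt_two he
  refine ⟨V * 2 ^ m * (1 - t)⁻¹, ?_, fun R hR => ?_⟩
  · exact mul_pos (mul_pos hVpos (by positivity)) (inv_pos.2 (by linarith))
  have hR0 : (0 : ℝ) < R := lt_of_lt_of_le one_pos hR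
  have he0 : e < 0 := by
    have : (1 : ℝ) ≤ m := by exact_mod_cast hm
    linarith
  -- the dyadic annuli
  set A : ℕ → Set (EuclideanSpace ℝ (Fin m)) :=
    fun k => {y | 2 ^ k * R < ‖y‖ ∧ ‖y‖ ≤ 2 ^ (k + 1) * R} with hA
  have hcover : {y : EuclideanSpace ℝ (Fin m) | R < ‖y‖} ⊆ ⋃ k, A k := by
    intro y hy
    have hy' : R < ‖y‖ := hy
    have hex : ∃ k : ℕ, ‖y‖ ≤ 2 ^ (k + 1) * R := by
      obtain ⟨k, hk⟩ := pow_unbounded_of_one_lt (‖y‖ / R) (one_lt_two (α := ℝ))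
      refine ⟨k, ?_⟩
      have : ‖y‖ / R < 2 ^ (k + 1) := hk.trans_le (by
        apply pow_le_pow_right₀ one_le_two (Nat.le_succ k))
      calc ‖y‖ = ‖y‖ / R * R := by field_simp
        _ ≤ 2 ^ (k + 1) * R := by nlinarith [this, hR0]
    classical
    set k₀ := Nat.find hex with hk₀
    refine Set.mem_iUnion.2 ⟨k₀, ?_, Nat.find_spec hex⟩
    rcases Nat.eq_zero_or_pos k₀ with h0 | hpos
    · simpa [h0] using hy'
    · obtain ⟨j, hj⟩ := Nat.exists_eq_succ_of_ne_zero hpos.ne'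
      have := Nat.find_min hex (by omega : j < k₀)
      push_neg at this
      simpa [hj] using this
  calc (∫⁻ y in {y : EuclideanSpace ℝ (Fin m) | R < ‖y‖}, ENNReal.ofReal (‖y‖ ^ e))
      ≤ ∫⁻ y in ⋃ k, A k, ENNReal.ofReal (‖y‖ ^ e) :=
        lintegral_mono_set hcover
    _ ≤ ∑' k, ∫⁻ y in A k, ENNReal.ofReal (‖y‖ ^ e) := lintegral_iUnion_le _ _
    _ ≤ ∑' k, ENNReal.ofReal (V * 2 ^ m * t ^ k * R ^ (e + (m : ℝ))) := by
        refine ENNReal.tsum_le_tsum fun k => ?_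
        have h1 : ∀ y ∈ A k, ENNReal.ofReal (‖y‖ ^ e) ≤
            ENNReal.ofReal ((2 ^ k * R) ^ e) := by
          intro y hy
          exact ENNReal.ofReal_le_ofReal
            (Real.rpow_le_rpow_of_nonpos (by positivity) hy.1.le he0.le)
        calc ∫⁻ y in A k, ENNReal.ofReal (‖y‖ ^ e)
            ≤ ∫⁻ _ in A k, ENNReal.ofReal ((2 ^ k * R) ^ e) :=
              setLIntegral_mono (by fun_prop) h1
          _ = ENNReal.ofReal ((2 ^ k * R) ^ e) * volume (A k) := setLIntegral_const _ _
          _ ≤ ENNReal.ofReal ((2 ^ k * R) ^ e) *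
              volume (closedBall (0 : EuclideanSpace ℝ (Fin m)) (2 ^ (k + 1) * R)) := by
              gcongr
              intro y hy
              exact mem_closedBall_zero_iff.2 hy.2
          _ = ENNReal.ofReal ((2 ^ k * R) ^ e) *
              (ENNReal.ofReal ((2 ^ (k + 1) * R) ^ m) *
                volume (ball (0 : EuclideanSpace ℝ (Fin m)) 1)) := by
              rw [Measure.addHaar_closedBall _ _ (by positivity)]
              simp [finrank_euclideanSpace_fin]
          _ = ENNReal.ofReal ((2 ^ k * R) ^ e * ((2 ^ (k + 1) * R) ^ m * V)) := by
              rw [ENNReal.ofReal_mul (by positivity), ENNReal.ofReal_mul (by positivity)]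
              congr 1
              congr 1
              rw [hV, ENNReal.ofReal_toReal hVfin]
          _ ≤ ENNReal.ofReal (V * 2 ^ m * t ^ k * R ^ (e + (m : ℝ))) := by
              apply ENNReal.ofReal_le_ofReal
              apply le_of_eq
              have h2 : (0:ℝ) < 2 ^ k := by positivity
              rw [Real.mul_rpow (by positivity) hR0.le]
              have hnat : ((2:ℝ) ^ (k+1) * R) ^ m = ((2:ℝ) ^ (k+1) * R) ^ (m:ℝ) := by
                rw [Real.rpow_natCast]
              rw [hnat, Real.mul_rpow (by positivity) hR0.le]
              have hpk : ((2:ℝ) ^ k) ^ e = (2:ℝ) ^ ((k:ℝ) * e) := by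
                rw [← Real.rpow_natCast 2 k, ← Real.rpow_mul (by norm_num)]
              have hpk1 : ((2:ℝ) ^ (k+1)) ^ (m:ℝ) = (2:ℝ) ^ (((k:ℝ)+1) * (m:ℝ)) := by
                rw [← Real.rpow_natCast 2 (k+1), ← Real.rpow_mul (by norm_num)]
                push_cast
                ring_nf
              have htk : t ^ k = (2:ℝ) ^ ((e + (m:ℝ)) * (k:ℝ)) := by
                rw [ht, ← Real.rpow_natCast t k, ← Real.rpow_mul (by norm_num)]
              have h2m : (2:ℝ) ^ m = (2:ℝ) ^ (m:ℝ) := by rw [Real.rpow_natCast]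
              rw [hpk, hpk1, htk, h2m]
              have e2 : R ^ e * R ^ (m:ℝ) = R ^ (e + (m:ℝ)) := (Real.rpow_add hR0 _ _).symm
              have e3 : (2:ℝ) ^ ((k:ℝ) * e) * (2:ℝ) ^ (((k:ℝ) + 1) * (m:ℝ)) =
                  (2:ℝ) ^ ((m:ℝ)) * (2:ℝ) ^ ((e + (m:ℝ)) * (k:ℝ)) := by
                rw [← Real.rpow_add two_pos, ← Real.rpow_add two_pos]
                ring_nf
              calc (2:ℝ) ^ ((k:ℝ) * e) * R ^ e * ((2:ℝ) ^ (((k:ℝ)+1) * (m:ℝ)) * R ^ (m:ℝ) * V)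
                  = ((2:ℝ) ^ ((k:ℝ) * e) * (2:ℝ) ^ (((k:ℝ)+1) * (m:ℝ))) *
                    (R ^ e * R ^ (m:ℝ)) * V := by ring
                _ = ((2:ℝ) ^ ((m:ℝ)) * (2:ℝ) ^ ((e + (m:ℝ)) * (k:ℝ))) *
                    (R ^ e * R ^ (m:ℝ)) * V := by rw [e3]
                _ = V * 2 ^ (m:ℝ) * (2:ℝ) ^ ((e + (m:ℝ)) * (k:ℝ)) * R ^ (e + (m:ℝ)) := by
                    rw [e2]; ring
    _ = ENNReal.ofReal (V * 2 ^ m * R ^ (e + (m : ℝ))) * ∑' k, (ENNReal.ofReal t) ^ k := by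
        rw [← ENNReal.tsum_mul_left]
        congr 1
        ext k
        rw [← ENNReal.ofReal_pow htpos.le, ← ENNReal.ofReal_mul (by positivity)]
        ring_nf
    _ ≤ ENNReal.ofReal (V * 2 ^ m * (1 - t)⁻¹ * R ^ (e + (m : ℝ))) := by
        rw [ENNReal.tsum_geometric]
        have h1 : (1 : ℝ≥0∞) - ENNReal.ofReal t = ENNReal.ofReal (1 - t) := by
          rw [← ENNReal.ofReal_one, ← ENNReal.ofReal_sub _ htpos.le]
        rw [h1, ← ENNReal.ofReal_inv_of_pos (by linarith)]
        rw [← ENNReal.ofReal_mul (by positivity)]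
        apply ENNReal.ofReal_le_ofReal
        apply le_of_eq
        ring

lemma extendBdry_apply {n : ℕ} (y' : EuclideanSpace ℝ (Fin (n - 1))) (i : Fin n) :
    extendBdry y' i = if h : (i : ℕ) < n - 1 then y' ⟨(i : ℕ), h⟩ else 0 := rfl

lemma norm_extendBdry {m : ℕ} (y' : EuclideanSpace ℝ (Fin m)) :
    ‖extendBdry (n := m + 1) y'‖ = ‖y'‖ := by
  rw [EuclideanSpace.norm_eq, EuclideanSpace.norm_eq]
  congr 1
  rw [Fin.sum_univ_castSucc]
  have hlast : extendBdry (n := m + 1) y' (Fin.last m) = 0 := by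
    rw [extendBdry_apply]; simp
  rw [hlast]
  simp only [norm_zero, ne_eq, OfNat.ofNat_ne_zero, not_false_eq_true, zero_pow, add_zero]
  apply Finset.sum_congr rfl
  intro i _
  congr 1
  rw [extendBdry_apply]
  simp [Fin.castSucc, Fin.is_lt]

set_option maxHeartbeats 1000000 in
/-- Estimate for `v₃(x) = ∫_{|y'|>2|x|} P(x,y') f(y') dy'`: a bound by
`A x_n |x|^{γ/p+(n-1)/q-n} (∫_{|y'|>2|x|} |f|^p/|y'|^γ)^{1/p}` with `A = A(n,p,γ)`,
and consequently `v₃(x) = o(x_n |x|^{γ/p+(n-1)/q-n})` as `|x| → ∞`, `x ∈ H`. -/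
theorem stmt12 (n : ℕ) (hn : 3 ≤ n) (p q γ : ℝ) (hp : 1 < p)
    (hpq : 1 / p + 1 / q = 1) (hγ : γ < ((n : ℝ) - 1) + p) :
    ∃ A : ℝ, 0 < A ∧
      ∀ f : EuclideanSpace ℝ (Fin (n - 1)) → ℝ, Measurable f →
        (∫⁻ y', ENNReal.ofReal (|f y'| ^ p / (1 + ‖y'‖) ^ γ) < ⊤) →
        (∀ x ∈ upperHalfSpace n, 2 ≤ ‖x‖ →
          |∫ y' in {y' : EuclideanSpace ℝ (Fin (n - 1)) | 2 * ‖x‖ < ‖y'‖},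
              halfSpacePoissonKernel n x y' * f y'| ≤
            A * lastCoord x * ‖x‖ ^ (γ / p + ((n : ℝ) - 1) / q - n) *
              (∫⁻ y' in {y' : EuclideanSpace ℝ (Fin (n - 1)) | 2 * ‖x‖ < ‖y'‖},
                ENNReal.ofReal (|f y'| ^ p / ‖y'‖ ^ γ)).toReal ^ (1 / p)) ∧
        ((fun x : EuclideanSpace ℝ (Fin n) =>
            ∫ y' in {y' : EuclideanSpace ℝ (Fin (n - 1)) | 2 * ‖x‖ < ‖y'‖},
              halfSpacePoissonKernel n x y' * f y')
          =o[comap (fun x => ‖x‖) atTop ⊓ 𝓟 (upperHalfSpace n)]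
          fun x => lastCoord x * ‖x‖ ^ (γ / p + ((n : ℝ) - 1) / q - n)) := by
  obtain ⟨m, rfl⟩ : ∃ m, n = m + 1 := ⟨n - 1, by omega⟩
  have hm : 0 < m := by omega
  -- exponent arithmetic
  have hp0 : 0 < p := lt_trans one_pos hp
  have h1p : 1 / p < 1 := (div_lt_one hp0).mpr hp
  have h1p0 : 0 < 1 / p := by positivity
  have hq' : 0 < 1 / q := by linarith
  have hq0 : 0 < q := by
    by_contra h
    push_neg at h
    have : 1 / q ≤ 0 := div_nonpos_of_nonneg_of_nonpos zero_le_one h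
    linarith
  have hq1 : 1 < q := by
    have : 1 / q < 1 := by linarith
    exact (div_lt_one hq0).mp this
  have hconj : p.HolderConjugate q := Real.holderConjugate_iff.mpr ⟨hp, by simpa [one_div] using hpq⟩
  have hpqid : p * q = p + q := by
    field_simp at hpq
    linarith
  have hγ' : γ < (m : ℝ) + p := by push_cast at hγ; linarith
  -- surface area positive
  have hω : 0 < surfaceArea (m + 1) := by
    unfold surfaceArea
    apply div_pos
    · have := Real.pi_pos
      positivity
    · apply Real.Gamma_pos_of_pos
      positivity
  set K : ℝ := 2 ^ (m + 2) / surfaceArea (m + 1) with hKdef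
  have hK : 0 < K := by positivity
  set e : ℝ := (γ / p - ((m : ℝ) + 1)) * q with hedef
  have he : e + (m : ℝ) < 0 := by
    have hqp : q / p = q - 1 := by
      have h' : 1 / p = 1 - 1 / q := by linarith
      calc q / p = q * (1 / p) := by ring
        _ = q * (1 - 1 / q) := by rw [h']
        _ = q - q * (1 / q) := by ring
        _ = q - 1 := by rw [mul_one_div, div_self hq0.ne']
    have hmono : γ / p < ((m : ℝ) + p) / p := (div_lt_div_iff_of_pos_right hp0).mpr hγ'
    have h2 : (γ / p) * q < ((m : ℝ) + p) * (q / p) := by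
      have hmul := mul_lt_mul_of_pos_right hmono hq0
      calc (γ / p) * q < (((m : ℝ) + p) / p) * q := hmul
        _ = ((m : ℝ) + p) * (q / p) := by ring
    rw [hqp] at h2
    have hgoal : (γ / p) * q < ((m : ℝ) + p) * (q - 1) := h2
    nlinarith [hgoal, hpqid]
  obtain ⟨C₁, hC₁, htail⟩ := tail_bound m hm e he
  set Eexp : ℝ := γ / p + (((m + 1 : ℕ) : ℝ) - 1) / q - ((m + 1 : ℕ) : ℝ) with hEdef
  have hE : (e + (m : ℝ)) / q = Eexp := by
    rw [hEdef, hedef]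
    push_cast
    field_simp
    ring
  set A : ℝ := K * (C₁ ^ (1 / q) * 2 ^ Eexp) with hAdef
  have hA : 0 < A :=
    mul_pos hK (mul_pos (Real.rpow_pos_of_pos hC₁ _) (Real.rpow_pos_of_pos two_pos _))
  refine ⟨A, hA, fun f hfm hfint => ?_⟩
  -- comparison constant between 1/‖y‖^γ and 1/(1+‖y‖)^γ
  set Cγ : ℝ := max 1 ((2 : ℝ) ^ γ) with hCγdef
  have hCγ1 : (1 : ℝ) ≤ Cγ := le_max_left _ _
  have hCγ0 : 0 < Cγ := lt_of_lt_of_le one_pos hCγ1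
  have hcomp : ∀ t : ℝ, 1 ≤ t → (1 + t) ^ γ ≤ Cγ * t ^ γ := by
    intro t ht
    have ht0 : 0 < t := lt_of_lt_of_le one_pos ht
    rcases le_or_gt 0 γ with hγ0 | hγ0
    · calc (1 + t) ^ γ ≤ (2 * t) ^ γ :=
            Real.rpow_le_rpow (by linarith) (by linarith) hγ0
        _ = 2 ^ γ * t ^ γ := Real.mul_rpow (by norm_num) ht0.le
        _ ≤ Cγ * t ^ γ := by
            apply mul_le_mul_of_nonneg_right (le_max_right _ _)
            exact Real.rpow_nonneg ht0.le _
    · calc (1 + t) ^ γ ≤ t ^ γ :=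
            Real.rpow_le_rpow_of_nonpos ht0 (by linarith) hγ0.le
        _ ≤ Cγ * t ^ γ := by
            nlinarith [Real.rpow_pos_of_pos ht0 γ]
  have hptle : ∀ y : EuclideanSpace ℝ (Fin (m + 1 - 1)), 1 < ‖y‖ →
      ENNReal.ofReal (|f y| ^ p / ‖y‖ ^ γ) ≤
        ENNReal.ofReal Cγ * ENNReal.ofReal (|f y| ^ p / (1 + ‖y‖) ^ γ) := by
    intro y hy
    have hy0 : (0 : ℝ) < ‖y‖ := lt_trans one_pos hy
    have hb : (0 : ℝ) < ‖y‖ ^ γ := Real.rpow_pos_of_pos hy0 _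
    have hc : (0 : ℝ) < (1 + ‖y‖) ^ γ := Real.rpow_pos_of_pos (by linarith) _
    have ha : (0 : ℝ) ≤ |f y| ^ p := Real.rpow_nonneg (abs_nonneg _) _
    have h1 := hcomp ‖y‖ hy.le
    rw [← ENNReal.ofReal_mul hCγ0.le]
    apply ENNReal.ofReal_le_ofReal
    rw [← mul_div_assoc, div_le_div_iff₀ hb hc]
    nlinarith [mul_le_mul_of_nonneg_left h1 ha]
  have hrp : Measurable fun t : ℝ => t ^ p := by fun_prop
  have hrγ : Measurable fun t : ℝ => t ^ γ := by fun_prop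
  have hmg : Measurable fun y : EuclideanSpace ℝ (Fin (m + 1 - 1)) =>
      ENNReal.ofReal (|f y| ^ p / ‖y‖ ^ γ) :=
    ((hrp.comp hfm.abs).div (hrγ.comp measurable_norm)).ennreal_ofReal
  -- finiteness of the tail integrals
  have hT1 : (∫⁻ y in {y : EuclideanSpace ℝ (Fin (m + 1 - 1)) | 1 < ‖y‖},
      ENNReal.ofReal (|f y| ^ p / ‖y‖ ^ γ)) < ⊤ := by
    have hSm : MeasurableSet {y : EuclideanSpace ℝ (Fin (m + 1 - 1)) | 1 < ‖y‖} :=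
      measurableSet_lt measurable_const measurable_norm
    calc (∫⁻ y in {y : EuclideanSpace ℝ (Fin (m + 1 - 1)) | 1 < ‖y‖},
          ENNReal.ofReal (|f y| ^ p / ‖y‖ ^ γ))
        ≤ ∫⁻ y in {y : EuclideanSpace ℝ (Fin (m + 1 - 1)) | 1 < ‖y‖},
            ENNReal.ofReal Cγ * ENNReal.ofReal (|f y| ^ p / (1 + ‖y‖) ^ γ) :=
          setLIntegral_mono' hSm fun y hy => hptle y hy
      _ = ENNReal.ofReal Cγ * ∫⁻ y in {y : EuclideanSpace ℝ (Fin (m + 1 - 1)) | 1 < ‖y‖},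
            ENNReal.ofReal (|f y| ^ p / (1 + ‖y‖) ^ γ) :=
          lintegral_const_mul' _ _ ENNReal.ofReal_ne_top
      _ ≤ ENNReal.ofReal Cγ * ∫⁻ y, ENNReal.ofReal (|f y| ^ p / (1 + ‖y‖) ^ γ) := by
          gcongr
          exact Measure.restrict_le_self
      _ < ⊤ := ENNReal.mul_lt_top ENNReal.ofReal_lt_top hfint
  -- the quantitative bound, proved once
  have Hbd : ∀ x ∈ upperHalfSpace (m + 1), 2 ≤ ‖x‖ →
      |∫ y' in {y' : EuclideanSpace ℝ (Fin (m + 1 - 1)) | 2 * ‖x‖ < ‖y'‖},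
          halfSpacePoissonKernel (m + 1) x y' * f y'| ≤
        A * lastCoord x * ‖x‖ ^ Eexp *
          (∫⁻ y' in {y' : EuclideanSpace ℝ (Fin (m + 1 - 1)) | 2 * ‖x‖ < ‖y'‖},
            ENNReal.ofReal (|f y'| ^ p / ‖y'‖ ^ γ)).toReal ^ (1 / p) := by
    intro x hxH hx2
    have hxn0 : 0 < lastCoord x := hxH
    set S := {y' : EuclideanSpace ℝ (Fin (m + 1 - 1)) | 2 * ‖x‖ < ‖y'‖} with hSdef
    have hSm : MeasurableSet S := measurableSet_lt measurable_const measurable_norm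
    set T := ∫⁻ y' in S, ENNReal.ofReal (|f y'| ^ p / ‖y'‖ ^ γ) with hTdef
    have hTfin : T ≠ ⊤ := by
      refine (lt_of_le_of_lt (lintegral_mono_set ?_) hT1).ne
      intro y hy
      have : 2 * ‖x‖ < ‖y‖ := hy
      have : (1 : ℝ) < 2 * ‖x‖ := by linarith
      simp only [Set.mem_setOf_eq]
      linarith [Set.mem_setOf_eq ▸ hy]
    -- Hölder factors
    set F : EuclideanSpace ℝ (Fin (m + 1 - 1)) → ℝ≥0∞ :=
      fun y => ENNReal.ofReal (|f y| * ‖y‖ ^ (-(γ / p))) with hFdef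
    set G : EuclideanSpace ℝ (Fin (m + 1 - 1)) → ℝ≥0∞ :=
      fun y => ENNReal.ofReal (‖y‖ ^ (γ / p - ((m : ℝ) + 1))) with hGdef
    have hFmeas : Measurable F := by
      have h2 : Measurable fun t : ℝ => t ^ (-(γ / p)) := by fun_prop
      exact (hfm.abs.mul (h2.comp measurable_norm)).ennreal_ofReal
    have hGmeas : Measurable G := by
      have h2 : Measurable fun t : ℝ => t ^ (γ / p - ((m : ℝ) + 1)) := by fun_prop
      exact (h2.comp measurable_norm).ennreal_ofReal
    -- pointwise kernel bound
    have hptwise : ∀ y ∈ S, ENNReal.ofReal ‖halfSpacePoissonKernel (m + 1) x y * f y‖ ≤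
        ENNReal.ofReal (K * lastCoord x) * (F y * G y) := by
      intro y hy
      have hy' : 2 * ‖x‖ < ‖y‖ := hy
      have hy4 : 4 ≤ ‖y‖ := by linarith
      have hy0 : (0 : ℝ) < ‖y‖ := by linarith
      have hd : ‖y‖ / 2 ≤ ‖x - extendBdry y‖ := by
        have h1 : ‖extendBdry (n := m + 1) y‖ - ‖x‖ ≤ ‖extendBdry (n := m + 1) y - x‖ :=
          norm_sub_norm_le _ _
        rw [norm_sub_rev, norm_extendBdry] at h1
        linarith
      have hd0 : (0 : ℝ) < ‖x - extendBdry y‖ := by linarith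
      have hP0 : 0 ≤ halfSpacePoissonKernel (m + 1) x y := by
        unfold halfSpacePoissonKernel
        apply div_nonneg (by linarith)
        exact mul_nonneg hω.le (pow_nonneg (norm_nonneg _) _)
      have hpowinv : ‖y‖ ^ (-((m : ℝ) + 1)) = ((‖y‖ ^ (m + 1) : ℝ))⁻¹ := by
        rw [Real.rpow_neg (norm_nonneg y)]
        congr 1
        rw [← Real.rpow_natCast ‖y‖ (m + 1)]
        norm_num
      have hPle : halfSpacePoissonKernel (m + 1) x y ≤
          K * lastCoord x * ‖y‖ ^ (-((m : ℝ) + 1)) := by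
        unfold halfSpacePoissonKernel
        have hb : (0 : ℝ) < surfaceArea (m + 1) * (‖y‖ / 2) ^ (m + 1) := by
          apply mul_pos hω
          positivity
        calc 2 * lastCoord x / (surfaceArea (m + 1) * ‖x - extendBdry y‖ ^ (m + 1))
            ≤ 2 * lastCoord x / (surfaceArea (m + 1) * (‖y‖ / 2) ^ (m + 1)) := by
              apply div_le_div_of_nonneg_left (by linarith) hb
              apply mul_le_mul_of_nonneg_left _ hω.le
              exact pow_le_pow_left₀ (by positivity) hd _
          _ = K * lastCoord x * ‖y‖ ^ (-((m : ℝ) + 1)) := by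
              rw [hpowinv, hKdef]
              rw [div_pow]
              have hy1 : (0 : ℝ) < ‖y‖ ^ (m + 1) := by positivity
              field_simp
              ring
      have hsplit : ‖y‖ ^ (-(γ / p)) * ‖y‖ ^ (γ / p - ((m : ℝ) + 1)) =
          ‖y‖ ^ (-((m : ℝ) + 1)) := by
        rw [← Real.rpow_add hy0]
        ring_nf
      have hFy : (0 : ℝ) ≤ |f y| * ‖y‖ ^ (-(γ / p)) := by positivity
      have hGy : (0 : ℝ) ≤ ‖y‖ ^ (γ / p - ((m : ℝ) + 1)) := Real.rpow_nonneg hy0.le _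
      calc ENNReal.ofReal ‖halfSpacePoissonKernel (m + 1) x y * f y‖
          = ENNReal.ofReal (halfSpacePoissonKernel (m + 1) x y * |f y|) := by
            rw [norm_mul, Real.norm_eq_abs, Real.norm_eq_abs, abs_of_nonneg hP0]
        _ ≤ ENNReal.ofReal ((K * lastCoord x) *
              ((|f y| * ‖y‖ ^ (-(γ / p))) * ‖y‖ ^ (γ / p - ((m : ℝ) + 1)))) := by
            apply ENNReal.ofReal_le_ofReal
            have : (|f y| * ‖y‖ ^ (-(γ / p))) * ‖y‖ ^ (γ / p - ((m : ℝ) + 1)) =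
                |f y| * ‖y‖ ^ (-((m : ℝ) + 1)) := by
              rw [mul_assoc, hsplit]
            rw [this]
            calc halfSpacePoissonKernel (m + 1) x y * |f y|
                ≤ (K * lastCoord x * ‖y‖ ^ (-((m : ℝ) + 1))) * |f y| :=
                  mul_le_mul_of_nonneg_right hPle (abs_nonneg _)
              _ = K * lastCoord x * (|f y| * ‖y‖ ^ (-((m : ℝ) + 1))) := by ring
        _ = ENNReal.ofReal (K * lastCoord x) * (F y * G y) := by
            rw [ENNReal.ofReal_mul (by positivity), ENNReal.ofReal_mul hFy]
    -- identify the Hölder factors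
    have hFp : (∫⁻ y in S, F y ^ p) = T := by
      rw [hTdef]
      apply setLIntegral_congr_fun_ae hSm
      apply ae_of_all
      intro y hy
      have hy' : 2 * ‖x‖ < ‖y‖ := hy
      have hy0 : (0 : ℝ) < ‖y‖ := by linarith
      show ENNReal.ofReal (|f y| * ‖y‖ ^ (-(γ / p))) ^ p =
        ENNReal.ofReal (|f y| ^ p / ‖y‖ ^ γ)
      rw [ENNReal.ofReal_rpow_of_nonneg (by positivity) hp0.le]
      congr 1
      rw [Real.mul_rpow (abs_nonneg _) (Real.rpow_nonneg hy0.le _)]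
      rw [← Real.rpow_mul (norm_nonneg y)]
      have hexp : -(γ / p) * p = -γ := by field_simp
      rw [hexp, Real.rpow_neg (norm_nonneg y), div_eq_mul_inv]
    have hGq : (∫⁻ y in S, G y ^ q) = ∫⁻ y in S, ENNReal.ofReal (‖y‖ ^ e) := by
      apply setLIntegral_congr_fun_ae hSm
      apply ae_of_all
      intro y _
      show ENNReal.ofReal (‖y‖ ^ (γ / p - ((m : ℝ) + 1))) ^ q =
        ENNReal.ofReal (‖y‖ ^ e)
      rw [ENNReal.ofReal_rpow_of_nonneg (Real.rpow_nonneg (norm_nonneg y) _) hq0.le]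
      congr 1
      rw [← Real.rpow_mul (norm_nonneg y), hedef]
    -- tail bound for the G factor
    have hR1 : (1 : ℝ) ≤ 2 * ‖x‖ := by linarith
    have hGtail : (∫⁻ y in S, G y ^ q) ≤
        ENNReal.ofReal (C₁ * (2 * ‖x‖) ^ (e + (m : ℝ))) := by
      rw [hGq]
      exact htail (2 * ‖x‖) hR1
    -- main chain
    rw [← Real.norm_eq_abs]
    refine le_trans (norm_integral_le_lintegral_norm _) ?_
    have hRHS0 : 0 ≤ A * lastCoord x * ‖x‖ ^ Eexp * T.toReal ^ (1 / p) := by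
      apply mul_nonneg
      apply mul_nonneg (mul_nonneg hA.le hxn0.le) (Real.rpow_nonneg (norm_nonneg x) _)
      exact Real.rpow_nonneg ENNReal.toReal_nonneg _
    apply ENNReal.toReal_le_of_le_ofReal hRHS0
    calc (∫⁻ y in S, ENNReal.ofReal ‖halfSpacePoissonKernel (m + 1) x y * f y‖)
        ≤ ∫⁻ y in S, ENNReal.ofReal (K * lastCoord x) * (F y * G y) :=
          setLIntegral_mono' hSm hptwise
      _ = ENNReal.ofReal (K * lastCoord x) * ∫⁻ y in S, (F * G) y :=
          lintegral_const_mul' _ _ ENNReal.ofReal_ne_top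
      _ ≤ ENNReal.ofReal (K * lastCoord x) *
            ((∫⁻ y in S, F y ^ p) ^ (1 / p) * (∫⁻ y in S, G y ^ q) ^ (1 / q)) := by
          gcongr
          exact ENNReal.lintegral_mul_le_Lp_mul_Lq _ hconj
            hFmeas.aemeasurable hGmeas.aemeasurable
      _ ≤ ENNReal.ofReal (K * lastCoord x) *
            (ENNReal.ofReal (T.toReal ^ (1 / p)) *
              ENNReal.ofReal ((C₁ * (2 * ‖x‖) ^ (e + (m : ℝ))) ^ (1 / q))) := by
          gcongr
          · rw [hFp,
              ← ENNReal.ofReal_rpow_of_nonneg ENNReal.toReal_nonneg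
                (by positivity : (0:ℝ) ≤ 1 / p),
              ENNReal.ofReal_toReal hTfin]
          · rw [← ENNReal.ofReal_rpow_of_nonneg (by positivity) (by positivity)]
            exact ENNReal.rpow_le_rpow hGtail (by positivity)
      _ = ENNReal.ofReal ((K * lastCoord x) * (T.toReal ^ (1 / p) *
            (C₁ * (2 * ‖x‖) ^ (e + (m : ℝ))) ^ (1 / q))) := by
          rw [ENNReal.ofReal_mul (mul_nonneg hK.le hxn0.le),
            ENNReal.ofReal_mul (Real.rpow_nonneg ENNReal.toReal_nonneg _)]
      _ ≤ ENNReal.ofReal (A * lastCoord x * ‖x‖ ^ Eexp * T.toReal ^ (1 / p)) := by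
          apply ENNReal.ofReal_le_ofReal
          have hsplit2 : (C₁ * (2 * ‖x‖) ^ (e + (m : ℝ))) ^ (1 / q) =
              C₁ ^ (1 / q) * (2 ^ Eexp * ‖x‖ ^ Eexp) := by
            rw [Real.mul_rpow hC₁.le (Real.rpow_nonneg (by positivity) _)]
            rw [← Real.rpow_mul (by positivity : (0:ℝ) ≤ 2 * ‖x‖)]
            have hexp2 : (e + (m : ℝ)) * (1 / q) = Eexp := by
              rw [← hE]; ring
            rw [hexp2, Real.mul_rpow (by norm_num) (norm_nonneg x)]
          rw [hsplit2, hAdef]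
          apply le_of_eq
          ring
  refine ⟨Hbd, ?_⟩
  -- little-o part
  have htends : Tendsto (fun k : ℕ =>
      ∫⁻ y in {y : EuclideanSpace ℝ (Fin (m + 1 - 1)) | (k : ℝ) < ‖y‖},
        ENNReal.ofReal (|f y| ^ p / ‖y‖ ^ γ)) atTop (𝓝 0) := by
    set g : EuclideanSpace ℝ (Fin (m + 1 - 1)) → ℝ≥0∞ :=
      fun y => ENNReal.ofReal (|f y| ^ p / ‖y‖ ^ γ) with hgdef
    have hs : ∀ k : ℕ,
        MeasurableSet {y : EuclideanSpace ℝ (Fin (m + 1 - 1)) | (k : ℝ) < ‖y‖} :=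
      fun k => measurableSet_lt measurable_const measurable_norm
    have hmono : Antitone fun k : ℕ =>
        {y : EuclideanSpace ℝ (Fin (m + 1 - 1)) | (k : ℝ) < ‖y‖} := by
      intro k l hkl y hy
      have h1 : (l : ℝ) < ‖y‖ := hy
      have h2 : (k : ℝ) ≤ l := by exact_mod_cast hkl
      simp only [Set.mem_setOf_eq]
      linarith
    have hfin : ∃ k : ℕ, (volume.withDensity g)
        {y : EuclideanSpace ℝ (Fin (m + 1 - 1)) | (k : ℝ) < ‖y‖} ≠ ⊤ := by
      refine ⟨1, ?_⟩
      rw [withDensity_apply g (hs 1)]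
      have h1 : {y : EuclideanSpace ℝ (Fin (m + 1 - 1)) | ((1 : ℕ) : ℝ) < ‖y‖} =
          {y : EuclideanSpace ℝ (Fin (m + 1 - 1)) | 1 < ‖y‖} := by norm_num
      rw [h1]
      exact hT1.ne
    have hinter : (⋂ k : ℕ, {y : EuclideanSpace ℝ (Fin (m + 1 - 1)) | (k : ℝ) < ‖y‖}) = ∅ := by
      ext y
      simp only [Set.mem_iInter, Set.mem_setOf_eq, Set.mem_empty_iff_false, iff_false]
      push_neg
      obtain ⟨k, hk⟩ := exists_nat_gt ‖y‖
      exact ⟨k, hk.le⟩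
    have h2 := tendsto_measure_iInter_atTop (μ := volume.withDensity g)
      (fun k => (hs k).nullMeasurableSet) hmono hfin
    rw [hinter] at h2
    simp only [measure_empty] at h2
    refine h2.congr fun k => ?_
    exact withDensity_apply g (hs k)
  rw [isLittleO_iff]
  intro c hc
  set δ : ℝ := (c / A) ^ p with hδdef
  have hδ0 : 0 < δ := Real.rpow_pos_of_pos (div_pos hc hA) _
  have hev1 := htends.eventually_lt_const (show (0 : ℝ≥0∞) < ENNReal.ofReal δ from
    ENNReal.ofReal_pos.2 hδ0)
  obtain ⟨k, hk⟩ := hev1.exists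
  have hmem : {x : EuclideanSpace ℝ (Fin (m + 1)) | max 2 (k : ℝ) ≤ ‖x‖} ∈
      comap (fun x : EuclideanSpace ℝ (Fin (m + 1)) => ‖x‖) atTop :=
    preimage_mem_comap (Ici_mem_atTop _)
  rw [eventually_inf_principal]
  refine Filter.eventually_of_mem hmem fun x hx hxH => ?_
  have hx2 : (2 : ℝ) ≤ ‖x‖ := le_trans (le_max_left _ _) hx
  have hxk : (k : ℝ) ≤ ‖x‖ := le_trans (le_max_right _ _) hx
  have hxn0 : 0 < lastCoord x := hxH
  have hTle : (∫⁻ y in {y : EuclideanSpace ℝ (Fin (m + 1 - 1)) | 2 * ‖x‖ < ‖y‖},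
        ENNReal.ofReal (|f y| ^ p / ‖y‖ ^ γ)) ≤
      ∫⁻ y in {y : EuclideanSpace ℝ (Fin (m + 1 - 1)) | (k : ℝ) < ‖y‖},
        ENNReal.ofReal (|f y| ^ p / ‖y‖ ^ γ) := by
    apply lintegral_mono_set
    intro y hy
    have h1 : 2 * ‖x‖ < ‖y‖ := hy
    simp only [Set.mem_setOf_eq]
    nlinarith [norm_nonneg x]
  have hbd := Hbd x hxH hx2
  have hTd : (∫⁻ y in {y : EuclideanSpace ℝ (Fin (m + 1 - 1)) | 2 * ‖x‖ < ‖y‖},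
      ENNReal.ofReal (|f y| ^ p / ‖y‖ ^ γ)).toReal ≤ δ :=
    ENNReal.toReal_le_of_le_ofReal hδ0.le (le_of_lt (lt_of_le_of_lt hTle hk))
  have h5 : (∫⁻ y in {y : EuclideanSpace ℝ (Fin (m + 1 - 1)) | 2 * ‖x‖ < ‖y‖},
      ENNReal.ofReal (|f y| ^ p / ‖y‖ ^ γ)).toReal ^ (1 / p) ≤ c / A := by
    calc (∫⁻ y in {y : EuclideanSpace ℝ (Fin (m + 1 - 1)) | 2 * ‖x‖ < ‖y‖},
        ENNReal.ofReal (|f y| ^ p / ‖y‖ ^ γ)).toReal ^ (1 / p)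
        ≤ δ ^ (1 / p) := Real.rpow_le_rpow ENNReal.toReal_nonneg hTd (by positivity)
      _ = c / A := by
          rw [hδdef, ← Real.rpow_mul (le_of_lt (div_pos hc hA)), mul_one_div,
            div_self hp0.ne', Real.rpow_one]
  have hgx0 : 0 ≤ lastCoord x * ‖x‖ ^ Eexp :=
    mul_nonneg hxn0.le (Real.rpow_nonneg (norm_nonneg x) _)
  calc ‖∫ y' in {y' : EuclideanSpace ℝ (Fin (m + 1 - 1)) | 2 * ‖x‖ < ‖y'‖},
        halfSpacePoissonKernel (m + 1) x y' * f y'‖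
      = |∫ y' in {y' : EuclideanSpace ℝ (Fin (m + 1 - 1)) | 2 * ‖x‖ < ‖y'‖},
          halfSpacePoissonKernel (m + 1) x y' * f y'| := Real.norm_eq_abs _
    _ ≤ A * lastCoord x * ‖x‖ ^ Eexp *
          (∫⁻ y' in {y' : EuclideanSpace ℝ (Fin (m + 1 - 1)) | 2 * ‖x‖ < ‖y'‖},
            ENNReal.ofReal (|f y'| ^ p / ‖y'‖ ^ γ)).toReal ^ (1 / p) := hbd
    _ ≤ A * lastCoord x * ‖x‖ ^ Eexp * (c / A) := by
        apply mul_le_mul_of_nonneg_left h5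
        apply mul_nonneg (mul_nonneg hA.le hxn0.le) (Real.rpow_nonneg (norm_nonneg x) _)
    _ = c * (lastCoord x * ‖x‖ ^ Eexp) := by
        field_simp
    _ = c * ‖lastCoord x * ‖x‖ ^ Eexp‖ := by
        rw [Real.norm_eq_abs, abs_of_nonneg hgx0]
end
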